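/- Fix n ≥ 1, k with 1 ≤ k ≤ n, a finite output type 𝒪, and a Markov kernel κ assigning to each s ∈ (Fin n → Bool) a probability mass function κ(s) on 𝒪. Let S be uniform on (Fin n → Bool) and, given S = s, let O be distributed as κ(s). For each i and o, let p⁺_i(o) := 2^{−(n−1)} ∑_{s : s(i) = true} κ(s)(o) and p⁻_i(o) := 2^{−(n−1)} ∑_{s : s(i) = false} κ(s)(o). Then: (a) for every guesser with abstentions G : 𝒪 → (Fin n → Option Bool) that makes exactly k guesses on every output (i.e., for every o, the set {i : G(o)(i) ≠ none} has cardinality k), the efficacy (1/k) ∑_{i} Pr[G(O)(i) = some (S(i))] is at most (1/(2k)) ∑_{o ∈ 𝒪} max over subsets A ⊆ Fin n of cardinality k of ∑_{i ∈ A} max(p⁺_i(o), p⁻_i(o)); and (b) there exists a guesser making exactly k guesses on every output that attains this bound with equality. -/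

import Mathlib

open Finset

/-- The conditional output distribution `p^b_i(o) = 2^{-(n-1)} ∑_{s : s i = b} κ s o`. -/
noncomputable def pCond {O : Type*} [Fintype O] (n : ℕ) (κ : (Fin n → Bool) → O → ℝ)
    (i : Fin n) (b : Bool) (o : O) : ℝ :=
  (1 / 2 ^ (n - 1)) * ∑ s : Fin n → Bool, if s i = b then κ s o else 0

/-- `Pr[G(O)(i) = some (S(i))]` for a guesser with abstentions, where `S` is uniform on
`Fin n → Bool` and `O ~ κ S`. -/
noncomputable def prCorrectAbs {O : Type*} [Fintype O] (n : ℕ) (κ : (Fin n → Bool) → O → ℝ)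
    (G : O → Fin n → Option Bool) (i : Fin n) : ℝ :=
  (1 / 2 ^ n) * ∑ s : Fin n → Bool, ∑ o : O, κ s o * (if G o i = some (s i) then 1 else 0)

/-- The efficacy of a guesser with abstentions that makes exactly `k` guesses. -/
noncomputable def efficacyAbs {O : Type*} [Fintype O] (n k : ℕ) (κ : (Fin n → Bool) → O → ℝ)
    (G : O → Fin n → Option Bool) : ℝ :=
  (1 / k) * ∑ i : Fin n, prCorrectAbs n κ G i

lemma pCond_nonneg' {O : Type*} [Fintype O] (n : ℕ) (κ : (Fin n → Bool) → O → ℝ)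
    (hκ0 : ∀ s o, 0 ≤ κ s o) (i : Fin n) (b : Bool) (o : O) : 0 ≤ pCond n κ i b o := by
  unfold pCond
  apply mul_nonneg (by positivity)
  apply Finset.sum_nonneg
  intro s _
  split
  · exact hκ0 s o
  · exact le_rfl

lemma prCorrectAbs_eq' {O : Type*} [Fintype O] (n : ℕ) (hn : 1 ≤ n)
    (κ : (Fin n → Bool) → O → ℝ) (G : O → Fin n → Option Bool) (i : Fin n) :
    prCorrectAbs n κ G i
      = (1/2) * ∑ o : O, (G o i).elim 0 (fun b => pCond n κ i b o) := by
  unfold prCorrectAbs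
  rw [Finset.sum_comm, Finset.mul_sum, Finset.mul_sum]
  apply Finset.sum_congr rfl
  intro o _
  cases hGo : G o i with
  | none =>
      simp
  | some b =>
      have hpow : (2:ℝ) ^ n = 2 * 2 ^ (n - 1) := by
        conv_lhs => rw [show n = (n - 1) + 1 by omega]
        rw [pow_succ]; ring
      have h2 : (1:ℝ) / 2 ^ n = (1/2) * (1 / 2 ^ (n-1)) := by
        rw [hpow]; ring
      rw [h2]
      simp only [Option.elim, pCond]
      rw [mul_assoc]
      congr 1
      congr 1
      apply Finset.sum_congr rfl
      intro s _
      by_cases h : s i = b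
      · simp [h]
      · have : some b ≠ some (s i) := by
          simp [Ne.symm h]
        simp [h, this]

theorem stmt7 (n k : ℕ) (hn : 1 ≤ n) (hk1 : 1 ≤ k) (hkn : k ≤ n) (O : Type*) [Fintype O]
    (κ : (Fin n → Bool) → O → ℝ) (hκ0 : ∀ s o, 0 ≤ κ s o) (hκ1 : ∀ s, ∑ o : O, κ s o = 1) :
    (∀ G : O → Fin n → Option Bool,
      (∀ o : O, (Finset.univ.filter (fun i => G o i ≠ none)).card = k) →
      efficacyAbs n k κ G ≤ (1 / (2 * k)) * ∑ o : O,
        sSup {x : ℝ | ∃ A : Finset (Fin n), A.card = k ∧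
          x = ∑ i ∈ A, max (pCond n κ i true o) (pCond n κ i false o)}) ∧
    (∃ G : O → Fin n → Option Bool,
      (∀ o : O, (Finset.univ.filter (fun i => G o i ≠ none)).card = k) ∧
      efficacyAbs n k κ G = (1 / (2 * k)) * ∑ o : O,
        sSup {x : ℝ | ∃ A : Finset (Fin n), A.card = k ∧
          x = ∑ i ∈ A, max (pCond n κ i true o) (pCond n κ i false o)}) := by
  classical
  set S : O → Set ℝ := fun o => {x : ℝ | ∃ A : Finset (Fin n), A.card = k ∧
      x = ∑ i ∈ A, max (pCond n κ i true o) (pCond n κ i false o)} with hSdef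
  have hfin : ∀ o, (S o).Finite := by
    intro o
    apply Set.Finite.subset (Set.finite_range
      (fun A : Finset (Fin n) => ∑ i ∈ A, max (pCond n κ i true o) (pCond n κ i false o)))
    rintro x ⟨A, -, rfl⟩
    exact ⟨A, rfl⟩
  have hne : ∀ o, (S o).Nonempty := by
    intro o
    obtain ⟨A, -, hA⟩ := Finset.exists_subset_card_eq (s := (univ : Finset (Fin n))) (n := k) (by simpa using hkn)
    exact ⟨_, A, hA, rfl⟩
  have hW : ∀ G : O → Fin n → Option Bool, efficacyAbs n k κ G
      = (1/(2*(k:ℝ))) * ∑ o : O, ∑ i : Fin n, ((G o i).elim 0 fun b => pCond n κ i b o) := by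
    intro G
    unfold efficacyAbs
    have : ∀ i : Fin n, prCorrectAbs n κ G i
        = (1/2) * ∑ o : O, (G o i).elim 0 (fun b => pCond n κ i b o) :=
      prCorrectAbs_eq' n hn κ G
    rw [Finset.sum_congr rfl (fun i _ => this i), ← Finset.mul_sum, Finset.sum_comm]
    ring
  constructor
  · intro G hG
    rw [hW G]
    have hc : (0:ℝ) ≤ 1 / (2 * (k:ℝ)) := by positivity
    apply mul_le_mul_of_nonneg_left _ hc
    apply Finset.sum_le_sum
    intro o _
    have h1 : ∑ i : Fin n, ((G o i).elim 0 fun b => pCond n κ i b o)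
        = ∑ i ∈ univ.filter (fun i => G o i ≠ none),
            ((G o i).elim 0 fun b => pCond n κ i b o) := by
      symm
      apply Finset.sum_filter_of_ne
      intro i _ h
      intro hnone
      apply h
      simp [hnone]
    rw [h1]
    have h2 : ∑ i ∈ univ.filter (fun i => G o i ≠ none),
          ((G o i).elim 0 fun b => pCond n κ i b o)
        ≤ ∑ i ∈ univ.filter (fun i => G o i ≠ none),
            max (pCond n κ i true o) (pCond n κ i false o) := by
      apply Finset.sum_le_sum
      intro i hi
      cases hGi : G o i with
      | none => simp [pCond_nonneg' n κ hκ0, le_max_iff, pCond_nonneg' n κ hκ0 i true o]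
      | some b =>
          cases b with
          | true => simpa using le_max_left _ _
          | false => simpa using le_max_right _ _
    refine h2.trans ?_
    apply le_csSup ((hfin o).bddAbove)
    exact ⟨univ.filter (fun i => G o i ≠ none), hG o, rfl⟩
  · have hsup : ∀ o, ∃ A : Finset (Fin n), A.card = k ∧
        sSup (S o) = ∑ i ∈ A, max (pCond n κ i true o) (pCond n κ i false o) :=
      fun o => (hne o).csSup_mem (hfin o)
    choose A hAcard hAeq using hsup
    refine ⟨fun o i => if i ∈ A o then
        some (if pCond n κ i false o ≤ pCond n κ i true o then true else false)
      else none, ?_, ?_⟩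
    · intro o
      have : (univ.filter fun i => (if i ∈ A o then
          some (if pCond n κ i false o ≤ pCond n κ i true o then true else false)
          else none) ≠ none) = A o := by
        ext i
        by_cases h : i ∈ A o <;> simp [h]
      rw [this]
      exact hAcard o
    · rw [hW]
      congr 1
      apply Finset.sum_congr rfl
      intro o _
      have : ∀ i : Fin n,
          ((if i ∈ A o then
            some (if pCond n κ i false o ≤ pCond n κ i true o then true else false)
            else none : Option Bool).elim 0 fun b => pCond n κ i b o)
          = if i ∈ A o then max (pCond n κ i true o) (pCond n κ i false o) else 0 := by
        intro i
        by_cases h : i ∈ A o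
        · by_cases h2 : pCond n κ i false o ≤ pCond n κ i true o
          · simp [h, h2, max_eq_left h2]
          · simp [h, h2, max_eq_right (le_of_not_ge h2)]
        · simp [h]
      rw [Finset.sum_congr rfl (fun i _ => this i), Finset.sum_ite_mem, Finset.univ_inter]
      exact (hAeq o).symm
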